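/- Let Σ be the ranked alphabet with one binary symbol σ and one nullary symbol α, and let L_1 ⊆ T_Σ be the comb tree language defined below. Then for every ℓ ≥ 1 and every tree u ∈ L_1, SP^ℓ_1(u) = ∅. -/

import Mathlib

namespace Paper

/-- Trees over a ranked alphabet `(Γ, ar)` as a W-type. -/
abbrev Tree {Γ : Type} (ar : Γ → ℕ) : Type := WType (fun g : Γ => Fin (ar g))

variable {Γ : Type} {ar : Γ → ℕ}

/-- Root symbol of a tree. -/
def root : Tree ar → Γ
  | ⟨g, _⟩ => g

/-- `inPos t w` holds iff `w` is a position of `t`. -/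
def inPos : Tree ar → List ℕ → Prop
  | _, [] => True
  | ⟨g, f⟩, i :: w => ∃ h : i < ar g, inPos (f ⟨i, h⟩) w

/-- The set of positions of a tree. -/
def pos (t : Tree ar) : Set (List ℕ) := {w | inPos t w}

/-- Subtree of `t` at position `w` (junk value if `w` is not a position of `t`). -/
def subtree : Tree ar → List ℕ → Tree ar
  | t, [] => t
  | ⟨g, f⟩, i :: w => if h : i < ar g then subtree (f ⟨i, h⟩) w else ⟨g, f⟩

/-- Branching positions of `t` together with two distinct successor directions. -/
def branch (t : Tree ar) : Set (List ℕ × ℕ × ℕ) :=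
  {p | p.1 ∈ pos t ∧ 2 ≤ ar (root (subtree t p.1)) ∧
       p.2.1 < ar (root (subtree t p.1)) ∧ p.2.2 < ar (root (subtree t p.1)) ∧ p.2.1 ≠ p.2.2}

/-- Branching positions of `t` along the path from `w` to `w ++ w''`. -/
def branchPath (t : Tree ar) (w w'' : List ℕ) : Set (List ℕ) :=
  {v | ∃ w', w' <+: w'' ∧ v = w ++ w' ∧ ∃ i j, (w ++ w', i, j) ∈ branch t}

/-- First projections of a set of triples. -/
def SPof (S : Set (List ℕ × ℕ × ℕ)) : Set (List ℕ) := {w | ∃ i j, (w, i, j) ∈ S}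

/-- The sets `SSP^ℓ_n(t)`. -/
def SSP (ℓ : ℕ) : ℕ → Tree ar → Set (List ℕ × ℕ × ℕ)
  | 0, t => branch t
  | n+1, t =>
      {p | p ∈ branch t ∧
        (∃ w₁ ∈ SPof (SSP ℓ n (subtree t (p.1 ++ [p.2.1]))),
          ℓ ^ (n+1) ≤ (branchPath t (p.1 ++ [p.2.1]) w₁ ∩ SPof (SSP ℓ n t)).ncard) ∧
        (∃ w₂ ∈ SPof (SSP ℓ n (subtree t (p.1 ++ [p.2.2]))),
          ℓ ^ (n+1) ≤ (branchPath t (p.1 ++ [p.2.2]) w₂ ∩ SPof (SSP ℓ n t)).ncard)}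

/-- The sets `SP^ℓ_n(t)`. -/
def SP (ℓ n : ℕ) (t : Tree ar) : Set (List ℕ) := SPof (SSP ℓ n t)

/-- Height of a tree: 0 for leaves, otherwise 1 + maximum height of the subtrees. -/
def height : Tree ar → ℕ
  | ⟨_, f⟩ => Finset.univ.sup fun i => height (f i) + 1

/-- Arity function for the alphabet `Δ` extended with `k` nullary variables. -/
def extAr {Δ : Type} (arΔ : Δ → ℕ) (k : ℕ) : Δ ⊕ Fin k → ℕ := Sum.elim arΔ fun _ => 0

/-- Trees over `Δ` with variables `x_0, …, x_{k-1}`: the set `T_Δ(X_k)`. -/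
abbrev TreeX {Δ : Type} (arΔ : Δ → ℕ) (k : ℕ) : Type := Tree (extAr arΔ k)

variable {Δ : Type} {arΔ : Δ → ℕ}

/-- Substitution `s[u 0, …, u (k-1)]` of trees for the variables. -/
def subst {k : ℕ} (u : Fin k → Tree arΔ) : TreeX arΔ k → Tree arΔ
  | ⟨Sum.inl d, f⟩ => ⟨d, fun i => subst u (f i)⟩
  | ⟨Sum.inr i, _⟩ => u i

/-- The tree map `ĥ` induced by a tree homomorphism `h`. -/
def applyHom {arΓ : Γ → ℕ} (h : ∀ g : Γ, TreeX arΔ (arΓ g)) : Tree arΓ → Tree arΔ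
  | ⟨g, f⟩ => subst (fun i => applyHom h (f i)) (h g)

/-- Number of occurrences of the variable `x_i` in a tree of `T_Δ(X_k)`. -/
def varCount {k : ℕ} (i : Fin k) : TreeX arΔ k → ℕ
  | ⟨Sum.inl _, f⟩ => ∑ j, varCount i (f j)
  | ⟨Sum.inr j, _⟩ => if j = i then 1 else 0

/-- A tree homomorphism is linear if every variable occurs at most once in each image. -/
def Linear {arΓ : Γ → ℕ} (h : ∀ g : Γ, TreeX arΔ (arΓ g)) : Prop :=
  ∀ (g : Γ) (i : Fin (arΓ g)), varCount i (h g) ≤ 1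

/-- A tree homomorphism is complete if every variable occurs at least once in each image. -/
def Complete {arΓ : Γ → ℕ} (h : ∀ g : Γ, TreeX arΔ (arΓ g)) : Prop :=
  ∀ (g : Γ) (i : Fin (arΓ g)), 1 ≤ varCount i (h g)

/-- Substitution of trees with variables into a tree with variables. -/
def substC {k : ℕ} (u : Fin k → TreeX arΔ k) : TreeX arΔ k → TreeX arΔ k
  | ⟨Sum.inl d, f⟩ => ⟨Sum.inl d, fun i => substC u (f i)⟩
  | ⟨Sum.inr i, _⟩ => u i

/-- Embedding of trees into trees with variables. -/
def embed {k : ℕ} : Tree arΔ → TreeX arΔ k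
  | ⟨d, f⟩ => ⟨Sum.inl d, fun i => embed (f i)⟩

/-- The alphabet with one binary symbol `σ` and one nullary symbol `α`. -/
inductive Sym : Type
  | sig : Sym
  | alp : Sym

/-- The arity function of `Sym`. -/
def arSym : Sym → ℕ
  | .sig => 2
  | .alp => 0

/-- Trees over the alphabet `Σ = {σ, α}`. -/
abbrev TSig : Type := Tree arSym

/-- The tree `α`. -/
def alphaT : TSig := ⟨Sym.alp, Fin.elim0⟩

/-- The variable `x` as a context. -/
def varX : TreeX arSym 1 := ⟨Sum.inr 0, Fin.elim0⟩

/-- `σ(c, c')` as a context. -/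
def sigX (c c' : TreeX arSym 1) : TreeX arSym 1 := ⟨Sum.inl Sym.sig, ![c, c']⟩

/-- The smallest set of contexts containing `σ(x, t)` for every `t ∈ Lprev` and
closed under context composition `c[c']`. -/
inductive CtxSet (Lprev : Set TSig) : TreeX arSym 1 → Prop
  | base {t : TSig} : t ∈ Lprev → CtxSet Lprev (sigX varX (embed t))
  | comp {c c' : TreeX arSym 1} : CtxSet Lprev c → CtxSet Lprev c' →
      CtxSet Lprev (substC (fun _ => c') c)

/-- The comb languages: `L_0 = {α}` and `L_{i+1} = { c[α] | c ∈ C_{i+1} }`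
where `C_{i+1}` is generated from `L_i`. -/
def Lang : ℕ → Set TSig
  | 0 => {alphaT}
  | i+1 => {t | ∃ c, CtxSet (Lang i) c ∧ subst (fun _ => alphaT) c = t}

/-- Right combs: `α` or `σ(t, α)` with `t` a comb. -/
inductive Comb : TSig → Prop
  | alpha : Comb alphaT
  | node {t : TSig} : Comb t → Comb ⟨Sym.sig, ![t, alphaT]⟩

lemma subst_substC {k : ℕ} (u : Fin k → Tree arΔ) (v : Fin k → TreeX arΔ k)
    (c : TreeX arΔ k) :
    subst u (substC v c) = subst (fun i => subst u (v i)) c := by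
  induction c with
  | mk g f ih =>
    cases g with
    | inl d =>
      show subst u ⟨Sum.inl d, fun i => substC v (f i)⟩ = _
      simp only [subst, ih]
      exact congrArg (WType.mk d) (funext fun i => ih i)
    | inr i => rfl

lemma subst_embed {k : ℕ} (u : Fin k → Tree arΔ) (t : Tree arΔ) :
    subst u (embed (k := k) t) = t := by
  induction t with
  | mk d f ih =>
    show subst u ⟨Sum.inl d, fun i => embed (f i)⟩ = _
    simp only [subst, ih]

lemma ctx_comb {c : TreeX arSym 1} (hc : CtxSet (Lang 0) c) :
    ∀ s : TSig, Comb s → Comb (subst (fun _ => s) c) := by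
  induction hc with
  | base ht =>
    intro s hs
    rcases ht with rfl
    have : subst (fun _ => s) (sigX varX (embed alphaT)) = ⟨Sym.sig, ![s, alphaT]⟩ := by
      show (⟨Sym.sig, fun i => subst (fun _ => s) (![varX, embed alphaT] i)⟩ : TSig) = _
      congr 1
      funext i
      match i with
      | ⟨0, _⟩ => rfl
      | ⟨1, _⟩ => exact subst_embed (fun _ => s) alphaT
    rw [this]
    exact Comb.node hs
  | comp _ _ ih ih' =>
    intro s hs
    rw [subst_substC]
    exact ih _ (ih' s hs)

lemma lang_one_comb {u : TSig} (hu : u ∈ Lang 1) : Comb u := by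
  rcases hu with ⟨c, hc, rfl⟩
  exact ctx_comb hc alphaT Comb.alpha

lemma subtree_append (t : Tree ar) (w v : List ℕ) (h : inPos t w) :
    subtree t (w ++ v) = subtree (subtree t w) v := by
  induction w generalizing t with
  | nil => obtain ⟨g, f⟩ := t; rfl
  | cons i w ih =>
    obtain ⟨g, f⟩ := t
    obtain ⟨hi, h⟩ := h
    show (if h' : i < ar g then subtree (f ⟨i, h'⟩) (w ++ v) else WType.mk g f) =
        subtree (if h' : i < ar g then subtree (f ⟨i, h'⟩) w else WType.mk g f) v
    rw [dif_pos hi, dif_pos hi]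
    exact ih _ h

lemma inPos_alpha {w : List ℕ} (h : inPos alphaT w) : w = [] := by
  cases w with
  | nil => rfl
  | cons i w =>
    obtain ⟨hi, _⟩ := h
    exact absurd hi (by simp [alphaT, arSym])

lemma branch_alpha : branch alphaT = ∅ := by
  ext ⟨w, i, j⟩
  simp only [branch, Set.mem_setOf_eq, Set.mem_empty_iff_false, iff_false]
  rintro ⟨hw, h2, -⟩
  have := inPos_alpha hw
  subst this
  simp [subtree, root, alphaT, arSym] at h2

lemma comb_subtree {t : TSig} (ht : Comb t) {w : List ℕ} (hw : inPos t w) :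
    Comb (subtree t w) := by
  induction w generalizing t with
  | nil => obtain ⟨g, f⟩ := t; exact ht
  | cons i w ih =>
    cases ht with
    | alpha => exact absurd (inPos_alpha hw) (by simp)
    | @node t' ht' =>
      obtain ⟨hi, hw⟩ := hw
      show Comb (if h : i < arSym Sym.sig then _ else _)
      rw [dif_pos hi]
      have hi2 : i < 2 := hi
      interval_cases i
      · exact ih ht' hw
      · exact ih Comb.alpha hw

/-- for every `ℓ ≥ 1` and every tree `u ∈ L_1`, `SP^ℓ_1(u) = ∅`. -/
theorem comb_SP_one_empty (ℓ : ℕ) (hℓ : 1 ≤ ℓ) (u : TSig) (hu : u ∈ Lang 1) :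
    SP ℓ 1 u = ∅ := by
  have hcomb := lang_one_comb hu
  ext w
  simp only [SP, SPof, Set.mem_setOf_eq, Set.mem_empty_iff_false, iff_false]
  rintro ⟨i, j, hbr, h1, h2⟩
  obtain ⟨hwpos, har, hi, hj, hij⟩ := hbr
  -- the subtree at w is a comb with arity ≥ 2, hence of the form σ(t', α)
  have hcs : Comb (subtree u w) := comb_subtree hcomb hwpos
  obtain ⟨t', heq⟩ : ∃ t', subtree u w = ⟨Sym.sig, ![t', alphaT]⟩ := by
    generalize hg : subtree u w = s at hcs har
    cases hcs with
    | alpha => simp [root, alphaT, arSym] at har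
    | @node t' ht' => exact ⟨t', rfl⟩
  · rw [heq] at hi hj
    have hi : i < 2 := hi
    have hj : j < 2 := hj
    -- the right subtree is α
    have hright : subtree u (w ++ [1]) = alphaT := by
      rw [subtree_append u w [1] hwpos, heq]
      show (if h : 1 < arSym Sym.sig then _ else _) = alphaT
      rw [dif_pos (by norm_num [arSym])]
      rfl
    -- one of i, j equals 1
    have key : ∀ v₁ ∈ SPof (SSP ℓ 0 (subtree u (w ++ [1]))), False := by
      intro v₁ hv₁
      rw [hright] at hv₁
      obtain ⟨a, b, hab⟩ := hv₁
      rw [show SSP ℓ 0 alphaT = branch alphaT from rfl, branch_alpha] at hab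
      exact hab
    interval_cases i <;> interval_cases j
    · exact hij rfl
    · obtain ⟨w₂, hw₂, -⟩ := h2
      exact key w₂ hw₂
    · obtain ⟨w₁, hw₁, -⟩ := h1
      exact key w₁ hw₁
    · exact hij rfl

end Paper
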